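/- Fix an integer d ≥ 3 and a real p with 1/(d-1) < p < 1. For every b > 0 and every ε > 0 small enough that p' := p − ε > 1/(d−1), setting ε' := ε/(1−p'), there exist c, C, R > 0 such that the following holds for all sufficiently large n. Let 𝒢 be a regular (b,d)-expander on n vertices with girth greater than 2R, let G' ∼ 𝒢_{p'} and F' ∼ 𝒢_{ε'} be independent, and define V̄₁(G') = { y : A^R_{x,y}(G') holds for some vertex x }. Then with probability at least 1 − C·exp(−c n) there exists a connected component C of the union graph G' ∪ F' containing all but at most 2εn of the vertices of V̄₁(G'). -/

import Mathlib

open scoped Classical symmDiff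

noncomputable section

namespace Percolation

variable {V : Type} [Fintype V] [DecidableEq V]

/-- The edge set of `G` as a finset. -/
noncomputable def edgeFinset' (G : SimpleGraph V) : Finset (Sym2 V) :=
  Finset.univ.filter (· ∈ G.edgeSet)

/-- Probability that bond percolation on `G` with parameter `p` produces a spanning
subgraph satisfying `P`. -/
noncomputable def percProb (G : SimpleGraph V) (p : ℝ) (P : SimpleGraph V → Prop) : ℝ :=
  ∑ s ∈ (edgeFinset' G).powerset,
    (p ^ s.card * (1 - p) ^ ((edgeFinset' G).card - s.card)) *
      (if P (SimpleGraph.fromEdgeSet (↑s)) then 1 else 0)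

/-- Joint probability for two independent bond percolations on `G`. -/
noncomputable def percProb2 (G : SimpleGraph V) (p₁ p₂ : ℝ)
    (P : SimpleGraph V → SimpleGraph V → Prop) : ℝ :=
  ∑ s ∈ (edgeFinset' G).powerset, ∑ t ∈ (edgeFinset' G).powerset,
    (p₁ ^ s.card * (1 - p₁) ^ ((edgeFinset' G).card - s.card)) *
    (p₂ ^ t.card * (1 - p₂) ^ ((edgeFinset' G).card - t.card)) *
      (if P (SimpleGraph.fromEdgeSet (↑s)) (SimpleGraph.fromEdgeSet (↑t)) then 1 else 0)

/-- Number of edges of `G` joining `S` to its complement. -/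
noncomputable def cutCard (G : SimpleGraph V) (S : Finset V) : ℕ :=
  ((edgeFinset' G).filter (fun e => ∃ x ∈ S, ∃ y, y ∉ S ∧ e = s(x, y))).card

/-- `G` is a `(b,d)`-expander: max degree at most `d`, and every vertex set of size at most
`n/2` has at least `b|S|` edges to its complement. -/
def IsExpander (G : SimpleGraph V) (b : ℝ) (d : ℕ) : Prop :=
  (∀ v, (G.neighborSet v).ncard ≤ d) ∧
  ∀ S : Finset V, (S.card : ℝ) ≤ Fintype.card V / 2 → b * S.card ≤ cutCard G S

/-- `G` is a regular `(b,d)`-expander. -/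
def IsRegularExpander (G : SimpleGraph V) (b : ℝ) (d : ℕ) : Prop :=
  IsExpander G b d ∧ ∀ v, (G.neighborSet v).ncard = d

/-- The vertices of the connected component `c` of `G`. -/
noncomputable def compVerts (G : SimpleGraph V) (c : G.ConnectedComponent) : Finset V :=
  Finset.univ.filter (fun v => G.connectedComponentMk v = c)

/-- The edges of the connected component `c` of `G`. -/
noncomputable def compEdges (G : SimpleGraph V) (c : G.ConnectedComponent) : Finset (Sym2 V) :=
  (edgeFinset' G).filter (fun e => ∀ v ∈ e, G.connectedComponentMk v = c)

/-- `c` is a largest connected component of `G`. -/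
def IsLargestComp (G : SimpleGraph V) (c : G.ConnectedComponent) : Prop :=
  ∀ c' : G.ConnectedComponent, (compVerts G c').card ≤ (compVerts G c).card

/-- The 2-core of the connected component `c` of `G` : the maximal subgraph of `G`
supported inside `c` all of whose vertices have degree at least 2. -/
noncomputable def twoCoreComp (G : SimpleGraph V) (c : G.ConnectedComponent) : SimpleGraph V :=
  sSup {H : SimpleGraph V | H ≤ G ∧ (∀ v ∈ H.support, G.connectedComponentMk v = c) ∧
    ∀ v ∈ H.support, 2 ≤ (H.neighborSet v).ncard}

/-- The event `A^R_{x,y}(H)`: the connected component of `y` in `H` with the edge `xy`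
removed (if present) has at least `R` vertices. -/
def eventA (H : SimpleGraph V) (R : ℕ) (x y : V) : Prop :=
  R ≤ (compVerts (H.deleteEdges {s(x, y)})
        ((H.deleteEdges {s(x, y)}).connectedComponentMk y)).card

/-- `E₁(H)`: edges `xy` of `H` such that `A^R_{x,y}` or `A^R_{y,x}` holds. -/
noncomputable def E1set (H : SimpleGraph V) (R : ℕ) : Finset (Sym2 V) :=
  (edgeFinset' H).filter (fun e => ∃ x y, e = s(x, y) ∧ (eventA H R x y ∨ eventA H R y x))

/-- `V₁(H)`: vertices `x` such that for some `y`, `xy ∈ E(H)` and `A^R_{x,y}` holds. -/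
noncomputable def V1set (H : SimpleGraph V) (R : ℕ) : Finset V :=
  Finset.univ.filter (fun x => ∃ y, H.Adj x y ∧ eventA H R x y)

/-- `E₂(H)`: edges `xy` of `H` such that both `A^R_{x,y}` and `A^R_{y,x}` hold. -/
noncomputable def E2set (H : SimpleGraph V) (R : ℕ) : Finset (Sym2 V) :=
  (edgeFinset' H).filter (fun e => ∃ x y, e = s(x, y) ∧ eventA H R x y ∧ eventA H R y x)

/-- `V₂(H)`: vertices incident to an edge of `E₂(H)`. -/
noncomputable def V2set (H : SimpleGraph V) (R : ℕ) : Finset V :=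
  Finset.univ.filter (fun x => ∃ e ∈ E2set H R, x ∈ e)

/-- `V̄₁(H)`: vertices `y` such that `A^R_{x,y}(H)` holds for some `x`. -/
noncomputable def Vbar1 (H : SimpleGraph V) (R : ℕ) : Finset V :=
  Finset.univ.filter (fun y => ∃ x, eventA H R x y)

/-- `S` is `k`-thick in `H`: a union of pairwise disjoint subsets, each of size at least
`k`, each inducing a connected subgraph of `H`. -/
def IsThick (H : SimpleGraph V) (k : ℕ) (S : Finset V) : Prop :=
  ∃ P : Finset (Finset V),
    (∀ T ∈ P, k ≤ T.card ∧ (H.induce (↑T : Set V)).Connected) ∧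
    (↑P : Set (Finset V)).PairwiseDisjoint id ∧ S = P.biUnion id

/-- `S` is a separator of `K`. -/
def IsSeparator {W : Type} [Fintype W] (K : SimpleGraph W) (S : Finset W) : Prop :=
  ∃ A B : Finset W, Disjoint A B ∧ Disjoint A S ∧ Disjoint B S ∧
    (∀ w, w ∈ A ∨ w ∈ B ∨ w ∈ S) ∧
    (∀ a ∈ A, ∀ b ∈ B, ¬ K.Adj a b) ∧
    3 * A.card ≤ 2 * Fintype.card W ∧ 3 * B.card ≤ 2 * Fintype.card W

namespace PercAux
set_option linter.unusedSectionVars false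

variable {α : Type*} [DecidableEq α]

/-- weight of a subset. -/
def wgt (q : ℝ) (E : Finset α) (s : Finset α) : ℝ := q ^ s.card * (1 - q) ^ (E.card - s.card)

theorem sum_wgt (q : ℝ) (E : Finset α) : ∑ s ∈ E.powerset, wgt q E s = 1 := by
  classical
  induction E using Finset.induction_on with
  | empty => simp [wgt]
  | @insert a E ha ih =>
    rw [Finset.sum_powerset_insert ha]
    have h1 : ∀ t ∈ E.powerset, wgt q (insert a E) t = (1 - q) * wgt q E t := by
      intro t ht
      rw [Finset.mem_powerset] at ht
      have htc : t.card ≤ E.card := Finset.card_le_card ht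
      rw [wgt, wgt, Finset.card_insert_of_notMem ha]
      rw [show E.card + 1 - t.card = (E.card - t.card) + 1 by omega, pow_succ]
      ring
    have h2 : ∀ t ∈ E.powerset, wgt q (insert a E) (insert a t) = q * wgt q E t := by
      intro t ht
      rw [Finset.mem_powerset] at ht
      have hat : a ∉ t := fun h => ha (ht h)
      have htc : t.card ≤ E.card := Finset.card_le_card ht
      rw [wgt, wgt, Finset.card_insert_of_notMem ha, Finset.card_insert_of_notMem hat]
      rw [show E.card + 1 - (t.card + 1) = E.card - t.card by omega, pow_succ]
      ring
    rw [Finset.sum_congr rfl h1, Finset.sum_congr rfl h2, ← Finset.mul_sum, ← Finset.mul_sum,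
      ih]
    ring

theorem wgt_nonneg {q : ℝ} (h0 : 0 ≤ q) (h1 : q ≤ 1) (E s : Finset α) : 0 ≤ wgt q E s :=
  mul_nonneg (pow_nonneg h0 _) (pow_nonneg (by linarith) _)

/-- splitting the powerset sum along a subset P ⊆ E. -/
theorem sum_powerset_split (E P : Finset α) (hP : P ⊆ E) (f : Finset α → ℝ) :
    ∑ t ∈ E.powerset, f t = ∑ u ∈ P.powerset, ∑ r ∈ (E \ P).powerset, f (u ∪ r) := by
  classical
  rw [← Finset.sum_product']
  apply Finset.sum_nbij' (i := fun t => (t ∩ P, t \ P)) (j := fun pr => pr.1 ∪ pr.2)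
  · intro t ht
    rw [Finset.mem_powerset] at ht
    simp only [Finset.mem_product, Finset.mem_powerset]
    exact ⟨Finset.inter_subset_right, fun x hx => by
      rw [Finset.mem_sdiff] at hx ⊢; exact ⟨ht hx.1, hx.2⟩⟩
  · intro pr hpr
    simp only [Finset.mem_product, Finset.mem_powerset] at hpr
    rw [Finset.mem_powerset]
    exact Finset.union_subset (hpr.1.trans hP) (hpr.2.trans (Finset.sdiff_subset))
  · intro t ht
    ext x; simp only [Finset.mem_union, Finset.mem_inter, Finset.mem_sdiff]; tauto
  · intro pr hpr
    simp only [Finset.mem_product, Finset.mem_powerset] at hpr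
    have h1 : (pr.1 ∪ pr.2) ∩ P = pr.1 := by
      apply Finset.Subset.antisymm
      · intro x hx
        rw [Finset.mem_inter, Finset.mem_union] at hx
        rcases hx.1 with h | h
        · exact h
        · exact absurd hx.2 (Finset.mem_sdiff.mp (hpr.2 h)).2
      · intro x hx
        exact Finset.mem_inter.mpr ⟨Finset.mem_union_left _ hx, hpr.1 hx⟩
    have h2 : (pr.1 ∪ pr.2) \ P = pr.2 := by
      apply Finset.Subset.antisymm
      · intro x hx
        rw [Finset.mem_sdiff, Finset.mem_union] at hx
        rcases hx.1 with h | h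
        · exact absurd (hpr.1 h) hx.2
        · exact h
      · intro x hx
        exact Finset.mem_sdiff.mpr ⟨Finset.mem_union_right _ hx,
          fun hh => (Finset.mem_sdiff.mp (hpr.2 hx)).2 hh⟩
    rw [h1, h2]
  · intro t ht
    have : t ∩ P ∪ t \ P = t := by
      ext x; simp only [Finset.mem_union, Finset.mem_inter, Finset.mem_sdiff]; tauto
    rw [this]

theorem wgt_mult {q : ℝ} {E P u r : Finset α} (hP : P ⊆ E) (hu : u ⊆ P) (hr : r ⊆ E \ P) :
    wgt q E (u ∪ r) = wgt q P u * wgt q (E \ P) r := by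
  have hdisj : Disjoint u r := by
    apply Finset.disjoint_left.mpr
    intro x hx hxr
    exact (Finset.mem_sdiff.mp (hr hxr)).2 (hu hx)
  have hcard : (u ∪ r).card = u.card + r.card := Finset.card_union_of_disjoint hdisj
  have hE : E.card = P.card + (E \ P).card := by
    rw [add_comm, Finset.card_sdiff_add_card_eq_card hP]
  have hu' : u.card ≤ P.card := Finset.card_le_card hu
  have hr' : r.card ≤ (E \ P).card := Finset.card_le_card hr
  rw [wgt, wgt, wgt, hcard, hE, pow_add,
    show P.card + (E \ P).card - (u.card + r.card)
      = (P.card - u.card) + ((E \ P).card - r.card) by omega, pow_add]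
  ring

/-- Independence bound: probability that none of the pairwise disjoint blocks is fully open. -/
theorem indep_bound {q : ℝ} (h0 : 0 ≤ q) (h1 : q < 1) (L : ℕ) :
    ∀ (l : List (Finset α)) (E : Finset α), (∀ P ∈ l, P ⊆ E) → (∀ P ∈ l, P.card ≤ L) →
    l.Pairwise Disjoint →
    ∑ t ∈ E.powerset, wgt q E t * (if ∀ P ∈ l, ¬ P ⊆ t then 1 else 0)
      ≤ (1 - q ^ L) ^ l.length := by
  intro l
  induction l with
  | nil =>
    intro E _ _ _
    simp [sum_wgt q E]
  | cons P l ih =>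
    intro E hsub hcard hpw
    have hPE : P ⊆ E := hsub P List.mem_cons_self
    rw [sum_powerset_split E P hPE]
    have key : ∀ u ∈ P.powerset, ∀ r ∈ (E \ P).powerset,
        wgt q E (u ∪ r) * (if ∀ Q ∈ P :: l, ¬ Q ⊆ u ∪ r then 1 else 0)
        = (wgt q P u * (if u = P then 0 else 1)) *
          (wgt q (E \ P) r * (if ∀ Q ∈ l, ¬ Q ⊆ r then 1 else 0)) := by
      intro u hu r hr
      rw [Finset.mem_powerset] at hu hr
      have hur : ∀ Q ∈ l, (Q ⊆ u ∪ r ↔ Q ⊆ r) := by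
        intro Q hQ
        have hQP : Disjoint P Q := (List.pairwise_cons.mp hpw).1 Q hQ
        constructor
        · intro h x hx
          rcases Finset.mem_union.mp (h hx) with h' | h'
          · exact absurd (hu h') (Finset.disjoint_right.mp hQP hx)
          · exact h'
        · intro h; exact h.trans Finset.subset_union_right
      have hPur : P ⊆ u ∪ r ↔ u = P := by
        constructor
        · intro h
          apply Finset.Subset.antisymm hu
          intro x hx
          rcases Finset.mem_union.mp (h hx) with h' | h'
          · exact h'
          · exact absurd hx (Finset.mem_sdiff.mp (hr h')).2
        · intro h; rw [← h]; exact Finset.subset_union_left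
      have hiff : (∀ Q ∈ P :: l, ¬ Q ⊆ u ∪ r) ↔ (¬ u = P ∧ ∀ Q ∈ l, ¬ Q ⊆ r) := by
        simp only [List.mem_cons, forall_eq_or_imp, hPur]
        constructor
        · rintro ⟨h1, h2⟩; exact ⟨h1, fun Q hQ => (hur Q hQ).not.mp (h2 Q hQ) ⟩
        · rintro ⟨h1, h2⟩; exact ⟨h1, fun Q hQ => (hur Q hQ).not.mpr (h2 Q hQ)⟩
      rw [wgt_mult hPE hu hr]
      by_cases hc1 : u = P
      · rw [if_pos hc1]
        by_cases hc2 : ∀ Q ∈ P :: l, ¬ Q ⊆ u ∪ r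
        · exact absurd (hiff.mp hc2).1 (not_not.mpr hc1)
        · rw [if_neg hc2]; ring
      · rw [if_neg hc1]
        by_cases hc2 : ∀ Q ∈ l, ¬ Q ⊆ r
        · rw [if_pos hc2, if_pos (hiff.mpr ⟨hc1, hc2⟩)]; ring
        · rw [if_neg hc2, if_neg (fun h => hc2 (hiff.mp h).2)]; ring
    rw [Finset.sum_congr rfl (fun u hu => Finset.sum_congr rfl (fun r hr => key u hu r hr))]
    have hfact : ∑ u ∈ P.powerset, ∑ r ∈ (E \ P).powerset,
        (wgt q P u * (if u = P then 0 else 1)) *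
          (wgt q (E \ P) r * (if ∀ Q ∈ l, ¬ Q ⊆ r then 1 else 0))
        = (∑ u ∈ P.powerset, wgt q P u * (if u = P then 0 else 1)) *
          (∑ r ∈ (E \ P).powerset, wgt q (E \ P) r * (if ∀ Q ∈ l, ¬ Q ⊆ r then 1 else 0)) := by
      rw [Finset.sum_mul_sum]
    rw [hfact]
    have hA1 : ∑ u ∈ P.powerset, wgt q P u * (if u = P then 0 else 1)
        = 1 - q ^ P.card := by
      have : ∀ u ∈ P.powerset, wgt q P u * (if u = P then 0 else 1)
          = wgt q P u - (if u = P then wgt q P u else 0) := by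
        intro u _; by_cases h : u = P <;> simp [h]
      rw [Finset.sum_congr rfl this, Finset.sum_sub_distrib, sum_wgt,
        Finset.sum_ite_eq' P.powerset P (wgt q P), if_pos (Finset.mem_powerset_self P)]
      simp [wgt]
    rw [hA1]
    have hsub' : ∀ Q ∈ l, Q ⊆ E \ P := by
      intro Q hQ
      have hQP : Disjoint P Q := (List.pairwise_cons.mp hpw).1 Q hQ
      intro x hx
      exact Finset.mem_sdiff.mpr ⟨hsub Q (List.mem_cons_of_mem _ hQ) hx,
        fun hxP => Finset.disjoint_left.mp hQP hxP hx⟩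
    have hA2 := ih (E \ P) hsub' (fun Q hQ => hcard Q (List.mem_cons_of_mem _ hQ))
      (List.pairwise_cons.mp hpw).2
    have hA2nn : 0 ≤ ∑ r ∈ (E \ P).powerset,
        wgt q (E \ P) r * (if ∀ Q ∈ l, ¬ Q ⊆ r then 1 else 0) := by
      apply Finset.sum_nonneg
      intro r _
      apply mul_nonneg (wgt_nonneg h0 h1.le _ _)
      split <;> norm_num
    have hq1 : (0:ℝ) ≤ 1 - q ^ L := by
      have : q ^ L ≤ 1 := pow_le_one₀ h0 h1.le
      linarith
    have hP1 : 1 - q ^ P.card ≤ 1 - q ^ L := by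
      have : q ^ L ≤ q ^ P.card :=
        pow_le_pow_of_le_one h0 h1.le (hcard P List.mem_cons_self)
      linarith
    have hP1nn : (0:ℝ) ≤ 1 - q ^ P.card := by
      have : q ^ P.card ≤ 1 := pow_le_one₀ h0 h1.le
      linarith
    calc (1 - q ^ P.card) * (∑ r ∈ (E \ P).powerset,
          wgt q (E \ P) r * (if ∀ Q ∈ l, ¬ Q ⊆ r then 1 else 0))
        ≤ (1 - q ^ L) * (1 - q ^ L) ^ l.length := by
          apply mul_le_mul hP1 hA2 hA2nn hq1
      _ = (1 - q ^ L) ^ (P :: l).length := by rw [List.length_cons, pow_succ]; ring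

end PercAux
set_option linter.unusedSectionVars false

theorem mem_edgeFinset' {G : SimpleGraph V} {e : Sym2 V} :
    e ∈ edgeFinset' G ↔ e ∈ G.edgeSet := by
  simp [edgeFinset']

theorem mem_compVerts {H : SimpleGraph V} {c : H.ConnectedComponent} {v : V} :
    v ∈ compVerts H c ↔ H.connectedComponentMk v = c := by
  simp [compVerts]

theorem mem_compVerts_mk {H : SimpleGraph V} {u v : V} :
    u ∈ compVerts H (H.connectedComponentMk v) ↔ H.Reachable u v := by
  rw [mem_compVerts, SimpleGraph.ConnectedComponent.eq]

theorem compVerts_nonempty {H : SimpleGraph V} (c : H.ConnectedComponent) :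
    (compVerts H c).Nonempty := by
  obtain ⟨v, hv⟩ := c.exists_rep
  exact ⟨v, mem_compVerts.mpr hv⟩

theorem compVerts_disjoint {H : SimpleGraph V} {c c' : H.ConnectedComponent} (h : c ≠ c') :
    Disjoint (compVerts H c) (compVerts H c') := by
  rw [Finset.disjoint_left]
  intro v hv hv'
  exact h ((mem_compVerts.mp hv).symm.trans (mem_compVerts.mp hv'))

theorem compVerts_mono {H K : SimpleGraph V} (hHK : H ≤ K) {v : V} :
    compVerts H (H.connectedComponentMk v) ⊆ compVerts K (K.connectedComponentMk v) := by
  intro u hu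
  exact mem_compVerts_mk.mpr ((mem_compVerts_mk.mp hu).mono hHK)

theorem mem_Vbar1 {H : SimpleGraph V} {R : ℕ} {y : V} :
    y ∈ Vbar1 H R ↔ R ≤ (compVerts H (H.connectedComponentMk y)).card := by
  constructor
  · rintro hy
    simp only [Vbar1, Finset.mem_filter, Finset.mem_univ, true_and] at hy
    obtain ⟨x, hx⟩ := hy
    refine le_trans hx (Finset.card_le_card ?_)
    exact compVerts_mono (SimpleGraph.deleteEdges_le _)
  · intro h
    simp only [Vbar1, Finset.mem_filter, Finset.mem_univ, true_and]
    refine ⟨y, ?_⟩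
    unfold eventA
    have hdel : H.deleteEdges {s(y, y)} = H := by
      ext a b
      simp only [SimpleGraph.deleteEdges_adj, Set.mem_singleton_iff, Sym2.eq, Sym2.rel_iff',
        Prod.mk.injEq, Prod.swap_prod_mk]
      constructor
      · exact fun h' => h'.1
      · intro h'
        refine ⟨h', fun hc => ?_⟩
        rcases hc with ⟨h1, h2⟩ | ⟨h1, h2⟩ <;> subst h1 <;> subst h2 <;> exact H.loopless.irrefl _ h'
    rw [hdel]
    exact h


def reachSet (H : SimpleGraph V) (A : Finset V) (t : ℕ) : Finset V :=
  Finset.univ.filter (fun y => ∃ a ∈ A, ∃ w : H.Walk a y, w.length ≤ t)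

theorem subset_reachSet (H : SimpleGraph V) (A : Finset V) (t : ℕ) : A ⊆ reachSet H A t := by
  intro a ha
  simp only [reachSet, Finset.mem_filter, Finset.mem_univ, true_and]
  exact ⟨a, ha, SimpleGraph.Walk.nil, by simp⟩

theorem reachSet_mono (H : SimpleGraph V) (A : Finset V) {t t' : ℕ} (h : t ≤ t') :
    reachSet H A t ⊆ reachSet H A t' := by
  intro y hy
  simp only [reachSet, Finset.mem_filter, Finset.mem_univ, true_and] at hy ⊢
  obtain ⟨a, ha, w, hw⟩ := hy
  exact ⟨a, ha, w, hw.trans h⟩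

theorem reachSet_step {H : SimpleGraph V} {A : Finset V} {t : ℕ} {x y : V}
    (hx : x ∈ reachSet H A t) (hxy : H.Adj x y) : y ∈ reachSet H A (t + 1) := by
  simp only [reachSet, Finset.mem_filter, Finset.mem_univ, true_and] at hx ⊢
  obtain ⟨a, ha, w, hw⟩ := hx
  exact ⟨a, ha, w.concat hxy, by rw [SimpleGraph.Walk.length_concat]; omega⟩

theorem edgeFinset'_eq (G : SimpleGraph V) : edgeFinset' G = G.edgeFinset := by
  ext e; simp [edgeFinset', SimpleGraph.mem_edgeFinset]

/-- one growth step -/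
theorem growth_step {G : SimpleGraph V} {d : ℕ}
    (hdeg : ∀ v, (G.neighborSet v).ncard ≤ d)
    (F : Finset (Sym2 V)) (A : Finset V) (t : ℕ) :
    ∃ img : Finset V, Disjoint img (reachSet (G.deleteEdges ↑F) A t) ∧
      img ⊆ reachSet (G.deleteEdges ↑F) A (t + 1) ∧
      cutCard G (reachSet (G.deleteEdges ↑F) A t) ≤ d * img.card + F.card := by
  set H := G.deleteEdges (↑F : Set (Sym2 V)) with hH
  set S := reachSet H A t with hS
  set cutE := ((edgeFinset' G).filter (fun e => ∃ x ∈ S, ∃ y, y ∉ S ∧ e = s(x, y))) with hcutE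
  set D := cutE \ F with hD
  set f : Sym2 V → V := fun e =>
    if h : ∃ y, y ∈ e ∧ y ∉ S then h.choose else (Quot.out e).1 with hf
  have hfspec : ∀ e ∈ cutE, f e ∈ e ∧ f e ∉ S := by
    intro e he
    rw [hcutE, Finset.mem_filter] at he
    obtain ⟨x, hxS, y, hyS, hexy⟩ := he.2
    have h : ∃ z, z ∈ e ∧ z ∉ S := ⟨y, by rw [hexy]; exact Sym2.mem_mk_right x y, hyS⟩
    rw [hf]
    simp only [dif_pos h]
    exact h.choose_spec
  have hnew : ∀ e ∈ D, f e ∉ S ∧ f e ∈ reachSet H A (t + 1) := by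
    intro e heD
    rw [hD, Finset.mem_sdiff] at heD
    obtain ⟨heC, heF⟩ := heD
    obtain ⟨hfe, hfS⟩ := hfspec e heC
    refine ⟨hfS, ?_⟩
    rw [hcutE, Finset.mem_filter] at heC
    obtain ⟨heG, x, hxS, y, hyS, hexy⟩ := heC
    subst hexy
    have hadj : G.Adj x y := (SimpleGraph.mem_edgeSet G).mp (mem_edgeFinset'.mp heG)
    have hfy : f s(x, y) = y := by
      rcases Sym2.mem_iff.mp hfe with h | h
      · exact absurd (by rw [h]; exact hxS) hfS
      · exact h
    have hadjH : H.Adj x y := by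
      rw [hH, SimpleGraph.deleteEdges_adj]
      exact ⟨hadj, fun hc => heF (Finset.mem_coe.mp hc)⟩
    rw [hfy]
    exact reachSet_step hxS hadjH
  refine ⟨D.image f, ?_, ?_, ?_⟩
  · rw [Finset.disjoint_left]
    intro v hv
    obtain ⟨e, he, hfe⟩ := Finset.mem_image.mp hv
    exact hfe ▸ (hnew e he).1
  · intro v hv
    obtain ⟨e, he, hfe⟩ := Finset.mem_image.mp hv
    exact hfe ▸ (hnew e he).2
  · have hDbound : D.card ≤ d * (D.image f).card := by
      apply Finset.card_le_mul_card_image_of_maps_to (fun e he => Finset.mem_image_of_mem f he)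
      intro y _
      have hsub : {e ∈ D | f e = y} ⊆ G.incidenceFinset y := by
        intro e he
        rw [Finset.mem_filter] at he
        have heC : e ∈ cutE := (Finset.mem_sdiff.mp he.1).1
        have heG : e ∈ G.edgeSet := mem_edgeFinset'.mp (Finset.mem_filter.mp heC).1
        rw [SimpleGraph.mem_incidenceFinset]
        exact ⟨heG, he.2 ▸ (hfspec e heC).1⟩
      calc {e ∈ D | f e = y}.card ≤ (G.incidenceFinset y).card := Finset.card_le_card hsub
        _ = G.degree y := G.card_incidenceFinset_eq_degree y
        _ = (G.neighborSet y).ncard := by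
            rw [← SimpleGraph.card_neighborFinset_eq_degree, SimpleGraph.neighborFinset_def,
              Set.ncard_eq_toFinset_card']
        _ ≤ d := hdeg y
    have hcut : cutCard G S ≤ D.card + F.card := by
      rw [cutCard]
      exact Finset.card_le_card_sdiff_add_card
    omega

/-- iterated growth: the reach set exceeds half the vertices. -/
theorem reach_big {G : SimpleGraph V} {b : ℝ} {d : ℕ}
    (hexp : IsExpander G b d) (hd : 0 < d) (hb : 0 < b) {ε : ℝ} (hε : 0 < ε)
    (hn : 0 < Fintype.card V)
    (A : Finset V) (hA : ε * Fintype.card V ≤ A.card)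
    (F : Finset (Sym2 V)) (hF : (F.card : ℝ) ≤ b * ε * Fintype.card V / 2)
    (T₀ : ℕ) (hT₀ : (1:ℝ) / 2 ≤ T₀ * (b * ε / (2 * d))) :
    (Fintype.card V : ℝ) / 2 < ((reachSet (G.deleteEdges ↑F) A T₀).card : ℝ) := by
  set n := Fintype.card V with hnn
  set H := G.deleteEdges (↑F : Set (Sym2 V)) with hH
  set δ : ℝ := b * ε / (2 * d) with hδ
  have hd' : (0:ℝ) < d := by exact_mod_cast hd
  have hδ0 : 0 < δ := by
    apply div_pos (mul_pos hb hε) (by linarith)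
  have hn' : (0:ℝ) < n := by exact_mod_cast hn
  have claim : ∀ t : ℕ, (n : ℝ) / 2 < ((reachSet H A t).card : ℝ) ∨
      ε * n + t * δ * n ≤ ((reachSet H A t).card : ℝ) := by
    intro t
    induction t with
    | zero =>
      right
      have := Finset.card_le_card (subset_reachSet H A 0)
      push_cast
      calc ε * n + 0 * δ * n = ε * n := by ring
        _ ≤ (A.card : ℝ) := hA
        _ ≤ _ := by exact_mod_cast this
    | succ t ih =>
      have hmono := Finset.card_le_card (reachSet_mono H A (Nat.le_succ t))
      rcases ih with h | h
      · left
        calc (n:ℝ)/2 < _ := h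
          _ ≤ _ := by exact_mod_cast hmono
      · by_cases hhalf : ((reachSet H A t).card : ℝ) ≤ n / 2
        · have hcut := hexp.2 (reachSet H A t) hhalf
          obtain ⟨img, hdisj, himg, hgrow⟩ := growth_step hexp.1 F A t
          have hunion : (reachSet H A t).card + img.card ≤ (reachSet H A (t+1)).card := by
            rw [← Finset.card_union_of_disjoint hdisj.symm]
            apply Finset.card_le_card
            exact Finset.union_subset (reachSet_mono H A (Nat.le_succ t)) himg
          have hlow : ε * n ≤ ((reachSet H A t).card : ℝ) := by
            have : (0:ℝ) ≤ t * δ * n := by positivity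
            linarith
          have himgcard : δ * n ≤ (img.card : ℝ) := by
            have h1 : b * (ε * n) ≤ b * ((reachSet H A t).card : ℝ) :=
              mul_le_mul_of_nonneg_left hlow hb.le
            have h2 : (cutCard G (reachSet H A t) : ℝ) ≤ d * img.card + F.card := by
              exact_mod_cast hgrow
            have h3 : b * ε * n - b * ε * n / 2 ≤ d * (img.card : ℝ) := by nlinarith [hcut]
            rw [hδ]
            rw [div_mul_eq_mul_div, div_le_iff₀ (by linarith)]
            nlinarith
          right
          have hsum : ((reachSet H A t).card : ℝ) + (img.card : ℝ)
              ≤ ((reachSet H A (t+1)).card : ℝ) := by exact_mod_cast hunion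
          push_cast
          nlinarith
        · left
          push_neg at hhalf
          calc (n:ℝ)/2 < _ := hhalf
            _ ≤ _ := by exact_mod_cast hmono
  rcases claim T₀ with h | h
  · exact h
  · have : (n:ℝ)/2 ≤ T₀ * δ * n := by
      rw [hδ] at *
      calc (n:ℝ)/2 = (1/2) * n := by ring
        _ ≤ (T₀ * (b * ε / (2*d))) * n := by
            apply mul_le_mul_of_nonneg_right hT₀ hn'.le
        _ = T₀ * (b * ε / (2*d)) * n := rfl
    have hεn : 0 < ε * n := mul_pos hε hn'
    linarith

/-- `P` contains a connection between `A` and `B`. -/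
def Connects (P : Finset (Sym2 V)) (A B : Finset V) : Prop :=
  ∃ a ∈ A, ∃ b ∈ B, (SimpleGraph.fromEdgeSet (↑P : Set (Sym2 V))).Reachable a b

theorem exists_path_finset {G : SimpleGraph V} {b : ℝ} {d : ℕ}
    (hexp : IsExpander G b d) (hd : 0 < d) (hb : 0 < b) {ε : ℝ} (hε : 0 < ε)
    (hn : 0 < Fintype.card V)
    (A B : Finset V) (hA : ε * Fintype.card V ≤ A.card) (hB : ε * Fintype.card V ≤ B.card)
    (F : Finset (Sym2 V)) (hF : (F.card : ℝ) ≤ b * ε * Fintype.card V / 2)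
    (T₀ : ℕ) (hT₀ : (1:ℝ) / 2 ≤ T₀ * (b * ε / (2 * d))) :
    ∃ P : Finset (Sym2 V), P ⊆ edgeFinset' G ∧ Disjoint P F ∧ P.card ≤ 2 * T₀ ∧
      Connects P A B := by
  set H := G.deleteEdges (↑F : Set (Sym2 V)) with hH
  have hX := reach_big hexp hd hb hε hn A hA F hF T₀ hT₀
  have hY := reach_big hexp hd hb hε hn B hB F hF T₀ hT₀
  have hinter : (reachSet H A T₀ ∩ reachSet H B T₀).Nonempty := by
    rw [← Finset.card_pos]
    have h1 := Finset.card_union_add_card_inter (reachSet H A T₀) (reachSet H B T₀)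
    have h2 : (reachSet H A T₀ ∪ reachSet H B T₀).card ≤ Fintype.card V := by
      apply le_trans (Finset.card_le_card (Finset.subset_univ _)) (le_of_eq (Finset.card_univ))
    by_contra hc
    push_neg at hc
    have : (reachSet H A T₀).card + (reachSet H B T₀).card ≤ Fintype.card V := by omega
    have : ((reachSet H A T₀).card : ℝ) + ((reachSet H B T₀).card : ℝ)
        ≤ (Fintype.card V : ℝ) := by exact_mod_cast this
    linarith
  obtain ⟨v, hv⟩ := hinter
  rw [Finset.mem_inter] at hv
  obtain ⟨hvA, hvB⟩ := hv
  simp only [reachSet, Finset.mem_filter, Finset.mem_univ, true_and] at hvA hvB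
  obtain ⟨a, ha, w₁, hw₁⟩ := hvA
  obtain ⟨bb, hbb, w₂, hw₂⟩ := hvB
  set w : H.Walk a bb := w₁.append w₂.reverse with hw
  have hwlen : w.length ≤ 2 * T₀ := by
    rw [hw, SimpleGraph.Walk.length_append, SimpleGraph.Walk.length_reverse]
    omega
  refine ⟨w.edges.toFinset, ?_, ?_, ?_, ?_⟩
  · intro e he
    rw [List.mem_toFinset] at he
    have := w.edges_subset_edgeSet he
    rw [hH, SimpleGraph.edgeSet_deleteEdges] at this
    exact mem_edgeFinset'.mpr this.1
  · rw [Finset.disjoint_left]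
    intro e he heF
    rw [List.mem_toFinset] at he
    have := w.edges_subset_edgeSet he
    rw [hH, SimpleGraph.edgeSet_deleteEdges] at this
    exact this.2 (Finset.mem_coe.mpr heF)
  · calc w.edges.toFinset.card ≤ w.edges.length := w.edges.toFinset_card_le
      _ = w.length := w.length_edges
      _ ≤ 2 * T₀ := hwlen
  · refine ⟨a, ha, bb, hbb, ?_⟩
    have htr : ∀ e ∈ w.edges, e ∈ (SimpleGraph.fromEdgeSet
        (↑w.edges.toFinset : Set (Sym2 V))).edgeSet := by
      intro e he
      rw [SimpleGraph.edgeSet_fromEdgeSet]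
      exact ⟨Finset.mem_coe.mpr (List.mem_toFinset.mpr he),
        H.not_isDiag_of_mem_edgeSet (w.edges_subset_edgeSet he)⟩
    exact ⟨w.transfer _ htr⟩

theorem subset_foldr_union {α : Type*} [DecidableEq α] (l : List (Finset α)) :
    ∀ P ∈ l, P ⊆ l.foldr (· ∪ ·) ∅ := by
  induction l with
  | nil => intro P hP; exact absurd hP List.not_mem_nil
  | cons Q l ih =>
    intro P hP
    rcases List.mem_cons.mp hP with h | h
    · subst h; exact Finset.subset_union_left
    · exact (ih P h).trans Finset.subset_union_right

theorem card_foldr_union_le {α : Type*} [DecidableEq α] (L : ℕ) (l : List (Finset α))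
    (h : ∀ P ∈ l, P.card ≤ L) : (l.foldr (· ∪ ·) ∅).card ≤ L * l.length := by
  induction l with
  | nil => simp
  | cons Q l ih =>
    calc (Q ∪ l.foldr (· ∪ ·) ∅).card ≤ Q.card + (l.foldr (· ∪ ·) ∅).card :=
          Finset.card_union_le _ _
      _ ≤ L + L * l.length := by
          have := ih (fun P hP => h P (List.mem_cons_of_mem _ hP))
          have hQ := h Q List.mem_cons_self
          omega
      _ = L * (Q :: l).length := by rw [List.length_cons]; ring

theorem exists_path_family {G : SimpleGraph V} {b : ℝ} {d : ℕ}
    (hexp : IsExpander G b d) (hd : 0 < d) (hb : 0 < b) {ε : ℝ} (hε : 0 < ε)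
    (hn : 0 < Fintype.card V)
    (A B : Finset V) (hA : ε * Fintype.card V ≤ A.card) (hB : ε * Fintype.card V ≤ B.card)
    (T₀ : ℕ) (hT₀ : (1:ℝ) / 2 ≤ T₀ * (b * ε / (2 * d)))
    (k : ℕ) (hk : (k : ℝ) * (2 * T₀) ≤ b * ε * Fintype.card V / 2) :
    ∃ Ps : List (Finset (Sym2 V)), Ps.length = k ∧ Ps.Pairwise Disjoint ∧
      ∀ P ∈ Ps, P ⊆ edgeFinset' G ∧ P.card ≤ 2 * T₀ ∧ Connects P A B := by
  induction k with
  | zero => exact ⟨[], rfl, List.Pairwise.nil, fun P hP => absurd hP List.not_mem_nil⟩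
  | succ k ih =>
    have hT0 : (0:ℝ) ≤ 2 * (T₀:ℝ) := by positivity
    obtain ⟨Ps, hlen, hpw, hprops⟩ := ih (by
      calc (k : ℝ) * (2 * T₀) ≤ (k+1 : ℝ) * (2 * T₀) := by nlinarith
        _ ≤ _ := by exact_mod_cast hk)
    set F := Ps.foldr (· ∪ ·) ∅ with hFdef
    have hFcard : (F.card : ℝ) ≤ b * ε * Fintype.card V / 2 := by
      have h1 : F.card ≤ 2 * T₀ * Ps.length :=
        card_foldr_union_le (2*T₀) Ps (fun P hP => (hprops P hP).2.1)
      rw [hlen] at h1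
      calc (F.card : ℝ) ≤ ((2 * T₀ * k : ℕ) : ℝ) := by exact_mod_cast h1
        _ = (k : ℝ) * (2 * T₀) := by push_cast; ring
        _ ≤ (k+1 : ℝ) * (2 * T₀) := by nlinarith
        _ ≤ _ := by exact_mod_cast hk
    obtain ⟨P, hPsub, hPdisj, hPcard, hPconn⟩ :=
      exists_path_finset hexp hd hb hε hn A B hA hB F hFcard T₀ hT₀
    refine ⟨P :: Ps, by simp [hlen], ?_, ?_⟩
    · rw [List.pairwise_cons]
      exact ⟨fun Q hQ => hPdisj.mono_right (subset_foldr_union Ps Q hQ), hpw⟩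
    · intro Q hQ
      rcases List.mem_cons.mp hQ with h | h
      · subst h; exact ⟨hPsub, hPcard, hPconn⟩
      · exact hprops Q h

/-- prefix-splitting of a list of masses. -/
theorem split_aux {γ : Type*} (f : γ → ℕ) (r M : ℝ) :
    ∀ (l : List γ) (acc : ℝ), acc < r → r ≤ acc + ((l.map f).sum : ℕ) →
      (∀ x ∈ l, (f x : ℝ) ≤ M - 2 * r) → acc + ((l.map f).sum : ℕ) ≤ M →
      ∃ l₁ l₂ : List γ, l = l₁ ++ l₂ ∧ r ≤ acc + ((l₁.map f).sum : ℕ) ∧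
        r ≤ M - (acc + ((l₁.map f).sum : ℕ)) := by
  intro l
  induction l with
  | nil =>
    intro acc hacc hge _ _
    simp only [List.map_nil, List.sum_nil, Nat.cast_zero, add_zero] at hge
    linarith
  | cons x xs ih =>
    intro acc hacc hge hbd hle
    by_cases hcase : r ≤ acc + (f x : ℝ)
    · refine ⟨[x], xs, rfl, ?_, ?_⟩
      · simpa using hcase
      · have hfx := hbd x List.mem_cons_self
        simp only [List.map_cons, List.sum_cons, List.map_nil, List.sum_nil, add_zero]
        push_cast
        linarith
    · push_neg at hcase
      have hsum : ((((x :: xs).map f).sum : ℕ) : ℝ) = (f x : ℝ) + ((xs.map f).sum : ℕ) := by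
        simp only [List.map_cons, List.sum_cons]
        push_cast
        ring
      obtain ⟨l₁, l₂, heq, h1, h2⟩ := ih (acc + f x) hcase
        (by rw [hsum] at hge; linarith)
        (fun y hy => hbd y (List.mem_cons_of_mem _ hy))
        (by rw [hsum] at hle; linarith)
      refine ⟨x :: l₁, l₂, by rw [heq, List.cons_append], ?_, ?_⟩
      · have : (((((x :: l₁)).map f).sum : ℕ) : ℝ) = (f x : ℝ) + ((l₁.map f).sum : ℕ) := by
          simp only [List.map_cons, List.sum_cons]; push_cast; ring
        rw [this]; linarith
      · have : (((((x :: l₁)).map f).sum : ℕ) : ℝ) = (f x : ℝ) + ((l₁.map f).sum : ℕ) := by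
          simp only [List.map_cons, List.sum_cons]; push_cast; ring
        rw [this]; linarith

theorem split_list {γ : Type*} (f : γ → ℕ) (r : ℝ) (hr : 0 < r) (l : List γ)
    (hbd : ∀ x ∈ l, (f x : ℝ) ≤ ((l.map f).sum : ℕ) - 2 * r)
    (hM : 2 * r < ((l.map f).sum : ℕ)) :
    ∃ l₁ l₂ : List γ, l = l₁ ++ l₂ ∧ r ≤ ((l₁.map f).sum : ℕ) ∧
      r ≤ ((l₂.map f).sum : ℕ) := by
  set M : ℝ := (((l.map f).sum : ℕ) : ℝ) with hMdef
  obtain ⟨l₁, l₂, heq, h1, h2⟩ := split_aux f r M l 0 hr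
    (by show r ≤ 0 + M; linarith) hbd (by show 0 + M ≤ M; linarith)
  refine ⟨l₁, l₂, heq, by simpa using h1, ?_⟩
  have hsplit : (((l.map f).sum : ℕ) : ℝ)
      = ((l₁.map f).sum : ℕ) + ((l₂.map f).sum : ℕ) := by
    rw [heq, List.map_append, List.sum_append]
    push_cast
    ring
  rw [hMdef, hsplit] at h2
  linarith

/-- `A` is a union of connected components of `H`, all of size at least `R`. -/
def UnionComps (H : SimpleGraph V) (R : ℕ) (A : Finset V) : Prop :=
  ∀ v ∈ A, R ≤ (compVerts H (H.connectedComponentMk v)).card ∧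
    compVerts H (H.connectedComponentMk v) ⊆ A

/-- if there is no component containing almost all of `V̄₁`, then the big components split
into two groups, far apart in `F'`. -/
theorem bad_structure {G' F' : SimpleGraph V} {R : ℕ} {ε : ℝ}
    (hn : 0 < Fintype.card V)
    (hbad : ¬ ∃ comp : (G' ⊔ F').ConnectedComponent,
      (((Vbar1 G' R) \ compVerts (G' ⊔ F') comp).card : ℝ) ≤ 2 * ε * Fintype.card V)
    (hε : 0 < ε) :
    ∃ A B : Finset V, Disjoint A B ∧
      UnionComps G' R A ∧ UnionComps G' R B ∧
      ε * Fintype.card V ≤ A.card ∧ ε * Fintype.card V ≤ B.card ∧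
      ∀ a ∈ A, ∀ b ∈ B, ¬ F'.Reachable a b := by
  classical
  set K := G' ⊔ F' with hK
  set W := Vbar1 G' R with hW
  push_neg at hbad
  set mass : K.ConnectedComponent → ℕ := fun c => (W ∩ compVerts K c).card with hmass
  set l : List K.ConnectedComponent := (Finset.univ : Finset K.ConnectedComponent).toList
    with hl
  have hlnodup : l.Nodup := Finset.nodup_toList _
  have hsum : (l.map mass).sum = W.card := by
    rw [hl, Finset.sum_map_toList]
    have : W.card = ∑ c : K.ConnectedComponent,
        (W.filter (fun v => K.connectedComponentMk v = c)).card := by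
      apply Finset.card_eq_sum_card_fiberwise
      intro v _
      exact Finset.mem_univ _
    rw [this]
    apply Finset.sum_congr rfl
    intro c _
    show (W ∩ compVerts K c).card = _
    congr 1
    ext v
    simp only [Finset.mem_inter, Finset.mem_filter, mem_compVerts]
  have hcardW : ∀ c : K.ConnectedComponent,
      (mass c : ℝ) ≤ (W.card : ℝ) - 2 * ε * Fintype.card V := by
    intro c
    have h1 := Finset.card_inter_add_card_sdiff W (compVerts K c)
    have h2 := hbad c
    have h1' : (mass c : ℝ) + ((W \ compVerts K c).card : ℝ) = W.card := by
      exact_mod_cast h1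
    linarith
  have hMlow : 2 * ε * Fintype.card V < (W.card : ℝ) := by
    obtain ⟨v⟩ := Fintype.card_pos_iff.mp hn
    have h2 := hbad (K.connectedComponentMk v)
    have : ((W \ compVerts K (K.connectedComponentMk v)).card : ℝ) ≤ W.card := by
      exact_mod_cast Finset.card_le_card (Finset.sdiff_subset)
    linarith
  have hrpos : 0 < ε * Fintype.card V := by
    apply mul_pos hε
    exact_mod_cast hn
  obtain ⟨l₁, l₂, heql, hs1, hs2⟩ := split_list mass (ε * Fintype.card V) hrpos l
    (by intro c _; rw [hsum]; calc (mass c : ℝ) ≤ (W.card:ℝ) - 2*ε*Fintype.card V := hcardW c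
         _ = (W.card:ℝ) - 2*(ε*Fintype.card V) := by ring)
    (by rw [hsum]; calc 2 * (ε * Fintype.card V) = 2*ε*Fintype.card V := by ring
         _ < _ := hMlow)
  have hdisj12 : l₁.Disjoint l₂ := List.disjoint_of_nodup_append (heql ▸ hlnodup)
  have hnodup1 : l₁.Nodup := (List.nodup_append.mp (heql ▸ hlnodup)).1
  have hnodup2 : l₂.Nodup := (List.nodup_append.mp (heql ▸ hlnodup)).2.1
  set A := l₁.toFinset.biUnion (fun c => W ∩ compVerts K c) with hA
  set B := l₂.toFinset.biUnion (fun c => W ∩ compVerts K c) with hB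
  have hcompdisj : ∀ (s : Finset K.ConnectedComponent),
      (↑s : Set K.ConnectedComponent).PairwiseDisjoint (fun c => W ∩ compVerts K c) := by
    intro s c _ c' _ hcc'
    apply Finset.disjoint_left.mpr
    intro v hv hv'
    rw [Finset.mem_inter] at hv hv'
    exact hcc' ((mem_compVerts.mp hv.2).symm.trans (mem_compVerts.mp hv'.2))
  have hAcard : (A.card : ℝ) = ((l₁.map mass).sum : ℕ) := by
    rw [hA, Finset.card_biUnion (fun c hc c' hc' h => hcompdisj l₁.toFinset hc hc' h)]
    rw [← List.sum_toFinset mass hnodup1]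
  have hBcard : (B.card : ℝ) = ((l₂.map mass).sum : ℕ) := by
    rw [hB, Finset.card_biUnion (fun c hc c' hc' h => hcompdisj l₂.toFinset hc hc' h)]
    rw [← List.sum_toFinset mass hnodup2]
  have memA : ∀ v ∈ A, v ∈ W ∧ ∃ c ∈ l₁, K.connectedComponentMk v = c := by
    intro v hv
    rw [hA, Finset.mem_biUnion] at hv
    obtain ⟨c, hc, hv⟩ := hv
    rw [Finset.mem_inter] at hv
    exact ⟨hv.1, c, List.mem_toFinset.mp hc, mem_compVerts.mp hv.2⟩
  have memB : ∀ v ∈ B, v ∈ W ∧ ∃ c ∈ l₂, K.connectedComponentMk v = c := by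
    intro v hv
    rw [hB, Finset.mem_biUnion] at hv
    obtain ⟨c, hc, hv⟩ := hv
    rw [Finset.mem_inter] at hv
    exact ⟨hv.1, c, List.mem_toFinset.mp hc, mem_compVerts.mp hv.2⟩
  have hUC : ∀ (ll : List K.ConnectedComponent) (v : V), v ∈ W →
      K.connectedComponentMk v ∈ ll →
      (R ≤ (compVerts G' (G'.connectedComponentMk v)).card ∧
        compVerts G' (G'.connectedComponentMk v) ⊆
          ll.toFinset.biUnion (fun c => W ∩ compVerts K c)) := by
    intro ll v hvW hvc
    refine ⟨mem_Vbar1.mp hvW, ?_⟩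
    intro u hu
    have hreach : G'.Reachable u v := mem_compVerts_mk.mp hu
    have huW : u ∈ W := by
      rw [hW, mem_Vbar1]
      have : G'.connectedComponentMk u = G'.connectedComponentMk v :=
        SimpleGraph.ConnectedComponent.sound hreach
      rw [this]
      exact mem_Vbar1.mp hvW
    have hreachK : K.Reachable u v := hreach.mono le_sup_left
    rw [Finset.mem_biUnion]
    refine ⟨K.connectedComponentMk v, List.mem_toFinset.mpr hvc, ?_⟩
    rw [Finset.mem_inter]
    exact ⟨huW, mem_compVerts_mk.mpr hreachK⟩
  refine ⟨A, B, ?_, ?_, ?_, ?_, ?_, ?_⟩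
  · apply Finset.disjoint_left.mpr
    intro v hv hv'
    obtain ⟨_, c, hc, hvc⟩ := memA v hv
    obtain ⟨_, c', hc', hvc'⟩ := memB v hv'
    rw [show c' = c from (hvc.symm.trans hvc').symm] at hc'
    exact hdisj12 hc hc'
  · intro v hv
    obtain ⟨hvW, c, hc, hvc⟩ := memA v hv
    exact hUC l₁ v hvW (hvc ▸ hc)
  · intro v hv
    obtain ⟨hvW, c, hc, hvc⟩ := memB v hv
    exact hUC l₂ v hvW (hvc ▸ hc)
  · rw [hAcard]; exact hs1
  · rw [hBcard]; exact hs2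
  · intro a ha bb hbb hr
    obtain ⟨_, c, hc, hac⟩ := memA a ha
    obtain ⟨_, c', hc', hbc⟩ := memB bb hbb
    have : K.connectedComponentMk a = K.connectedComponentMk bb :=
      SimpleGraph.ConnectedComponent.sound (hr.mono le_sup_right)
    rw [hac, hbc] at this
    rw [show c' = c from this.symm] at hc'
    exact hdisj12 hc hc'

/-- candidate pairs for the union bound. -/
def goodPairs (G' : SimpleGraph V) (R : ℕ) (ε : ℝ) : Finset (Finset V × Finset V) :=
  Finset.univ.filter (fun AB => Disjoint AB.1 AB.2 ∧ UnionComps G' R AB.1 ∧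
    UnionComps G' R AB.2 ∧ ε * Fintype.card V ≤ AB.1.card ∧ ε * Fintype.card V ≤ AB.2.card)

theorem goodPairs_card (G' : SimpleGraph V) {R : ℕ} (hR : 0 < R) (ε : ℝ) :
    (goodPairs G' R ε).card ≤ 3 ^ (Fintype.card V / R) := by
  classical
  set CompsR : Finset G'.ConnectedComponent :=
    Finset.univ.filter (fun c => R ≤ (compVerts G' c).card) with hCompsR
  have hcount : CompsR.card ≤ Fintype.card V / R := by
    rw [Nat.le_div_iff_mul_le hR]
    calc CompsR.card * R = ∑ _c ∈ CompsR, R := by rw [Finset.sum_const, smul_eq_mul]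
      _ ≤ ∑ c ∈ CompsR, (compVerts G' c).card := by
          apply Finset.sum_le_sum
          intro c hc
          exact (Finset.mem_filter.mp hc).2
      _ = (CompsR.biUnion (compVerts G')).card := by
          rw [Finset.card_biUnion]
          intro c _ c' _ h
          exact compVerts_disjoint h
      _ ≤ Fintype.card V := by
          apply le_trans (Finset.card_le_card (Finset.subset_univ _))
          exact le_of_eq Finset.card_univ
  set Φ : (Finset V × Finset V) → ({c // c ∈ CompsR} → Fin 3) := fun AB c =>
    if compVerts G' c.1 ⊆ AB.1 then 0 else if compVerts G' c.1 ⊆ AB.2 then 1 else 2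
    with hΦ
  have hmem : ∀ AB ∈ goodPairs G' R ε, ∀ A'B' ∈ goodPairs G' R ε,
      Φ AB = Φ A'B' → AB.1 ⊆ A'B'.1 ∧ AB.2 ⊆ A'B'.2 := by
    intro AB hAB A'B' hA'B' heq
    rw [goodPairs, Finset.mem_filter] at hAB hA'B'
    obtain ⟨-, hdj, hU1, hU2, -, -⟩ := hAB
    obtain ⟨-, hdj', hU1', hU2', -, -⟩ := hA'B'
    constructor
    · intro v hv
      obtain ⟨hRc, hsub⟩ := hU1 v hv
      have hcmem : G'.connectedComponentMk v ∈ CompsR := by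
        rw [hCompsR, Finset.mem_filter]
        exact ⟨Finset.mem_univ _, hRc⟩
      have h0 : Φ AB ⟨_, hcmem⟩ = 0 := by rw [hΦ]; simp only [if_pos hsub]
      have h0' : Φ A'B' ⟨_, hcmem⟩ = 0 := by rw [← heq]; exact h0
      have hsub' : compVerts G' (G'.connectedComponentMk v) ⊆ A'B'.1 := by
        by_contra hc
        rw [hΦ] at h0'
        simp only [if_neg hc] at h0'
        split at h0' <;> simp at h0'
      exact hsub' (mem_compVerts.mpr rfl)
    · intro v hv
      obtain ⟨hRc, hsub⟩ := hU2 v hv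
      have hcmem : G'.connectedComponentMk v ∈ CompsR := by
        rw [hCompsR, Finset.mem_filter]
        exact ⟨Finset.mem_univ _, hRc⟩
      have hnsub : ¬ compVerts G' (G'.connectedComponentMk v) ⊆ AB.1 := by
        intro hc
        exact Finset.disjoint_left.mp hdj (hc (mem_compVerts.mpr rfl)) hv
      have h1 : Φ AB ⟨_, hcmem⟩ = 1 := by
        rw [hΦ]; simp only [if_neg hnsub, if_pos hsub]
      have h1' : Φ A'B' ⟨_, hcmem⟩ = 1 := by rw [← heq]; exact h1
      have hsub' : compVerts G' (G'.connectedComponentMk v) ⊆ A'B'.2 := by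
        by_contra hc
        rw [hΦ] at h1'
        by_cases hc1 : compVerts G' (G'.connectedComponentMk v) ⊆ A'B'.1
        · simp only [if_pos hc1] at h1'; exact absurd h1' (by decide)
        · simp only [if_neg hc1, if_neg hc] at h1'; exact absurd h1' (by decide)
      exact hsub' (mem_compVerts.mpr rfl)
  have hinj : Set.InjOn Φ (goodPairs G' R ε) := by
    intro AB hAB A'B' hA'B' heq
    have h1 := hmem AB hAB A'B' hA'B' heq
    have h2 := hmem A'B' hA'B' AB hAB heq.symm
    exact Prod.ext (Finset.Subset.antisymm h1.1 h2.1) (Finset.Subset.antisymm h1.2 h2.2)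
  calc (goodPairs G' R ε).card
      ≤ (Finset.univ : Finset ({c // c ∈ CompsR} → Fin 3)).card := by
        apply Finset.card_le_card_of_injOn Φ (fun _ _ => Finset.mem_univ _) hinj
    _ = 3 ^ CompsR.card := by
        rw [Finset.card_univ, Fintype.card_fun, Fintype.card_coe, Fintype.card_fin]
    _ ≤ 3 ^ (Fintype.card V / R) := Nat.pow_le_pow_right (by norm_num) hcount

set_option maxHeartbeats 2000000 in
theorem giant_after_sprinkling (d : ℕ) (hd : 3 ≤ d) (p : ℝ)
    (hp : 1 / ((d : ℝ) - 1) < p) (hp1 : p < 1)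
    (b ε : ℝ) (hb : 0 < b) (hε : 0 < ε)
    (hp' : 1 / ((d : ℝ) - 1) < p - ε) :
    ∃ c > (0:ℝ), ∃ C > (0:ℝ), ∃ R : ℕ, 0 < R ∧ ∃ n₀ : ℕ,
      ∀ (V : Type) [Fintype V] [DecidableEq V] (G : SimpleGraph V),
        n₀ ≤ Fintype.card V → IsRegularExpander G b d →
        ((2 * R : ℕ) : ℕ∞) < G.girth →
        1 - C * Real.exp (-c * Fintype.card V) ≤
          percProb2 G (p - ε) (ε / (1 - (p - ε))) (fun G' F' =>
            ∃ comp : (G' ⊔ F').ConnectedComponent,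
              (((Vbar1 G' R) \ compVerts (G' ⊔ F') comp).card : ℝ)
                ≤ 2 * ε * Fintype.card V) := by
  classical
  -- scalar facts
  have hd2 : (2:ℝ) ≤ (d:ℝ) - 1 := by
    have : (3:ℝ) ≤ (d:ℝ) := by exact_mod_cast hd
    linarith
  have hinv : 0 < 1 / ((d:ℝ) - 1) := by positivity
  have hp'0 : 0 < p - ε := lt_trans hinv hp'
  have hp'1 : p - ε < 1 := by linarith
  have h1p' : 0 < 1 - (p - ε) := by linarith
  have hq0 : 0 < ε / (1 - (p - ε)) := div_pos hε h1p'
  have hq1 : ε / (1 - (p - ε)) < 1 := by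
    rw [div_lt_one h1p']
    linarith
  set q : ℝ := ε / (1 - (p - ε)) with hqdef
  have hd0 : 0 < d := by omega
  have hdr : (0:ℝ) < (d:ℝ) := by exact_mod_cast hd0
  have hbε : 0 < b * ε := mul_pos hb hε
  -- constants
  set T₀ : ℕ := ⌈(d:ℝ)/(b*ε)⌉₊ + 1 with hT₀def
  have hT₀pos : 0 < T₀ := Nat.succ_pos _
  have hT₀r : (d:ℝ)/(b*ε) ≤ (T₀:ℝ) := by
    refine le_trans (Nat.le_ceil _) ?_
    exact_mod_cast Nat.le_succ _
  have hT₀ : (1:ℝ)/2 ≤ (T₀:ℝ) * (b*ε/(2*(d:ℝ))) := by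
    have hpos : (0:ℝ) < b*ε/(2*(d:ℝ)) := by positivity
    calc (1:ℝ)/2 = ((d:ℝ)/(b*ε)) * (b*ε/(2*(d:ℝ))) := by
          field_simp
      _ ≤ (T₀:ℝ) * (b*ε/(2*(d:ℝ))) := mul_le_mul_of_nonneg_right hT₀r hpos.le
  set L : ℕ := 2 * T₀ with hLdef
  have hL0 : 0 < L := by omega
  have hLr : (0:ℝ) < (L:ℝ) := by exact_mod_cast hL0
  have hqL1 : q ^ L < 1 := pow_lt_one₀ hq0.le hq1 (by omega)
  have hqL0 : 0 < q ^ L := pow_pos hq0 L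
  set β : ℝ := - Real.log (1 - q^L) with hβdef
  have hβ0 : 0 < β := by
    rw [hβdef, neg_pos]
    exact Real.log_neg (by linarith) (by linarith)
  set c : ℝ := β * (b*ε) / (4*(L:ℝ)) with hcdef
  have hc0 : 0 < c := by positivity
  set R : ℕ := ⌈(4*(L:ℝ)*Real.log 3)/(β*(b*ε))⌉₊ + 1 with hRdef
  have hR0 : 0 < R := Nat.succ_pos _
  have hRr : (0:ℝ) < (R:ℝ) := by exact_mod_cast hR0
  have hlog3 : 0 < Real.log 3 := Real.log_pos (by norm_num)
  have hRration : (4*(L:ℝ)*Real.log 3)/(β*(b*ε)) ≤ (R:ℝ) := by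
    have h1 : (R:ℝ) = ((⌈(4*(L:ℝ)*Real.log 3)/(β*(b*ε))⌉₊ : ℕ) : ℝ) + 1 := by
      rw [hRdef]; push_cast; ring
    calc (4*(L:ℝ)*Real.log 3)/(β*(b*ε)) ≤ ((⌈(4*(L:ℝ)*Real.log 3)/(β*(b*ε))⌉₊ : ℕ) : ℝ) :=
          Nat.le_ceil _
      _ ≤ _ := by rw [h1]; linarith
  have hRbound : Real.log 3 / (R:ℝ) ≤ β*(b*ε)/(4*(L:ℝ)) := by
    rw [div_le_div_iff₀ hRr (by positivity)]
    rw [div_le_iff₀ (by positivity)] at hRration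
    linarith
  refine ⟨c, hc0, Real.exp β, Real.exp_pos β, R, hR0, 1, ?_⟩
  intro V _ _ G hn hreg hgirth
  have hn0 : 0 < Fintype.card V := hn
  have hnr : (0:ℝ) < (Fintype.card V : ℝ) := by exact_mod_cast hn0
  have hexp : IsExpander G b d := hreg.1
  set n : ℕ := Fintype.card V with hndef
  set E₀ : Finset (Sym2 V) := edgeFinset' G with hE₀
  set W1 : Finset (Sym2 V) → ℝ := PercAux.wgt (p - ε) E₀ with hW1
  set W2 : Finset (Sym2 V) → ℝ := PercAux.wgt q E₀ with hW2
  have hW1nn : ∀ s, 0 ≤ W1 s := fun s => PercAux.wgt_nonneg hp'0.le hp'1.le E₀ s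
  have hW2nn : ∀ t, 0 ≤ W2 t := fun t => PercAux.wgt_nonneg hq0.le hq1.le E₀ t
  set k : ℕ := ⌊b*ε*(n:ℝ)/(2*(L:ℝ))⌋₊ with hkdef
  set Qpred : SimpleGraph V → SimpleGraph V → Prop := fun G' F' =>
    ∃ comp : (G' ⊔ F').ConnectedComponent,
      (((Vbar1 G' R) \ compVerts (G' ⊔ F') comp).card : ℝ)
        ≤ 2 * ε * n with hQpred
  set BND : ℝ := (3:ℝ)^(n / R) * (1 - q^L)^k with hBND
  have hblk : (0:ℝ) ≤ (1 - q^L)^k := pow_nonneg (by linarith) k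
  have hBNDnn : 0 ≤ BND := by positivity
  -- inner bound for a fixed s
  have inner : ∀ s ∈ E₀.powerset,
      (∑ t ∈ E₀.powerset, W2 t *
        (if ¬ Qpred (SimpleGraph.fromEdgeSet (↑s)) (SimpleGraph.fromEdgeSet (↑t))
          then 1 else 0)) ≤ BND := by
    intro s _
    set G' : SimpleGraph V := SimpleGraph.fromEdgeSet (↑s) with hG'
    set Closed : (Finset V × Finset V) → Finset (Sym2 V) → Prop := fun AB t =>
      ∀ a ∈ AB.1, ∀ bb ∈ AB.2,
        ¬ (SimpleGraph.fromEdgeSet (↑t : Set (Sym2 V))).Reachable a bb with hClosed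
    have hpoint : ∀ t ∈ E₀.powerset,
        W2 t * (if ¬ Qpred G' (SimpleGraph.fromEdgeSet (↑t)) then 1 else 0)
        ≤ ∑ AB ∈ goodPairs G' R ε, W2 t * (if Closed AB t then 1 else 0) := by
      intro t _
      by_cases hQ : Qpred G' (SimpleGraph.fromEdgeSet (↑t))
      · rw [if_neg (not_not.mpr hQ), mul_zero]
        apply Finset.sum_nonneg
        intro AB _
        apply mul_nonneg (hW2nn t)
        split <;> norm_num
      · rw [if_pos hQ, mul_one]
        obtain ⟨A, B, hdisj, hU1, hU2, hA, hB, hreach⟩ :=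
          bad_structure (G' := G') (F' := SimpleGraph.fromEdgeSet (↑t)) (R := R) hn0 hQ hε
        have hABmem : (A, B) ∈ goodPairs G' R ε := by
          rw [goodPairs, Finset.mem_filter]
          exact ⟨Finset.mem_univ _, hdisj, hU1, hU2, hA, hB⟩
        have hABClosed : Closed (A, B) t := fun a ha bb hbb => hreach a ha bb hbb
        calc W2 t = W2 t * (if Closed (A, B) t then 1 else 0) := by
              rw [if_pos hABClosed, mul_one]
          _ ≤ _ := by
              apply Finset.single_le_sum (f := fun AB => W2 t * (if Closed AB t then 1 else 0))
                (fun AB _ => by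
                  apply mul_nonneg (hW2nn t); split <;> norm_num) hABmem
    have hclosed_bound : ∀ AB ∈ goodPairs G' R ε,
        (∑ t ∈ E₀.powerset, W2 t * (if Closed AB t then 1 else 0)) ≤ (1 - q^L)^k := by
      intro AB hABmem
      rw [goodPairs, Finset.mem_filter] at hABmem
      obtain ⟨-, -, -, -, hA, hB⟩ := hABmem
      obtain ⟨Ps, hlen, hpw, hprops⟩ := exists_path_family hexp hd0 hb hε hn0 AB.1 AB.2
        hA hB T₀ hT₀ k (by
          have hfl : (k:ℝ) ≤ b*ε*(n:ℝ)/(2*(L:ℝ)) := Nat.floor_le (by positivity)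
          have hLcast : (L:ℝ) = 2*(T₀:ℝ) := by rw [hLdef]; push_cast; ring
          calc (k:ℝ) * (2*(T₀:ℝ)) ≤ (b*ε*(n:ℝ)/(2*(L:ℝ))) * (2*(T₀:ℝ)) := by
                apply mul_le_mul_of_nonneg_right hfl (by positivity)
            _ = b*ε*(n:ℝ)/2 := by rw [hLcast]; field_simp)
      calc (∑ t ∈ E₀.powerset, W2 t * (if Closed AB t then 1 else 0))
          ≤ ∑ t ∈ E₀.powerset, W2 t * (if ∀ P ∈ Ps, ¬ P ⊆ t then 1 else 0) := by
            apply Finset.sum_le_sum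
            intro t _
            apply mul_le_mul_of_nonneg_left _ (hW2nn t)
            by_cases hcl : Closed AB t
            · rw [if_pos hcl]
              have : ∀ P ∈ Ps, ¬ P ⊆ t := by
                intro P hP hPt
                obtain ⟨-, -, a, ha, bb, hbb, hr⟩ := hprops P hP
                have hmono : SimpleGraph.fromEdgeSet (↑P : Set (Sym2 V))
                    ≤ SimpleGraph.fromEdgeSet (↑t : Set (Sym2 V)) :=
                  SimpleGraph.fromEdgeSet_mono (Finset.coe_subset.mpr hPt)
                exact hcl a ha bb hbb (hr.mono hmono)
              rw [if_pos this]
            · rw [if_neg hcl]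
              split <;> norm_num
        _ ≤ (1 - q^L) ^ Ps.length := by
            have hib := PercAux.indep_bound hq0.le hq1 L Ps E₀
              (fun P hP => (hprops P hP).1)
              (fun P hP => by
                have := (hprops P hP).2.1
                omega)
              hpw
            refine le_trans (le_of_eq ?_) hib
            apply Finset.sum_congr rfl
            intro t _
            congr 1
            by_cases h : ∀ P ∈ Ps, ¬ P ⊆ t
            · rw [if_pos h, if_pos h]
            · rw [if_neg h, if_neg h]
        _ = (1 - q^L)^k := by rw [hlen]
    calc (∑ t ∈ E₀.powerset, W2 t *
          (if ¬ Qpred G' (SimpleGraph.fromEdgeSet (↑t)) then 1 else 0))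
        ≤ ∑ t ∈ E₀.powerset, ∑ AB ∈ goodPairs G' R ε,
            W2 t * (if Closed AB t then 1 else 0) :=
          Finset.sum_le_sum hpoint
      _ = ∑ AB ∈ goodPairs G' R ε, ∑ t ∈ E₀.powerset,
            W2 t * (if Closed AB t then 1 else 0) := Finset.sum_comm
      _ ≤ ∑ _AB ∈ goodPairs G' R ε, (1 - q^L)^k :=
          Finset.sum_le_sum hclosed_bound
      _ = ((goodPairs G' R ε).card : ℝ) * (1 - q^L)^k := by
          rw [Finset.sum_const, nsmul_eq_mul]
      _ ≤ BND := by
          rw [hBND]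
          apply mul_le_mul_of_nonneg_right _ hblk
          have := goodPairs_card G' hR0 ε
          calc ((goodPairs G' R ε).card : ℝ) ≤ ((3^(n/R) : ℕ) : ℝ) := by
                exact_mod_cast this
            _ = (3:ℝ)^(n/R) := by push_cast; ring
  -- split percProb2 into 1 minus bad sum
  have hsplit : percProb2 G (p - ε) q Qpred
      = 1 - ∑ s ∈ E₀.powerset, W1 s * (∑ t ∈ E₀.powerset, W2 t *
          (if ¬ Qpred (SimpleGraph.fromEdgeSet (↑s)) (SimpleGraph.fromEdgeSet (↑t))
            then 1 else 0)) := by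
    have hstep : percProb2 G (p - ε) q Qpred
        = ∑ s ∈ E₀.powerset, ∑ t ∈ E₀.powerset, (W1 s * W2 t) *
            (if Qpred (SimpleGraph.fromEdgeSet (↑s)) (SimpleGraph.fromEdgeSet (↑t))
              then 1 else 0) := by
      rw [percProb2]
      apply Finset.sum_congr rfl
      intro s _
      apply Finset.sum_congr rfl
      intro t _
      by_cases hQ : Qpred (SimpleGraph.fromEdgeSet (↑s)) (SimpleGraph.fromEdgeSet (↑t))
      · rw [if_pos hQ, if_pos hQ]
        rfl
      · rw [if_neg hQ, if_neg hQ]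
        rfl
    rw [hstep]
    have hterm : ∀ s ∈ E₀.powerset, ∀ t ∈ E₀.powerset,
        (W1 s * W2 t) *
            (if Qpred (SimpleGraph.fromEdgeSet (↑s)) (SimpleGraph.fromEdgeSet (↑t))
              then 1 else 0)
        = W1 s * W2 t - W1 s * (W2 t *
            (if ¬ Qpred (SimpleGraph.fromEdgeSet (↑s)) (SimpleGraph.fromEdgeSet (↑t))
              then 1 else 0)) := by
      intro s _ t _
      by_cases hQ : Qpred (SimpleGraph.fromEdgeSet (↑s)) (SimpleGraph.fromEdgeSet (↑t))
      · rw [if_pos hQ, if_neg (not_not.mpr hQ)]; ring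
      · rw [if_neg hQ, if_pos hQ]; ring
    calc (∑ s ∈ E₀.powerset, ∑ t ∈ E₀.powerset,
            (W1 s * W2 t) *
            (if Qpred (SimpleGraph.fromEdgeSet (↑s)) (SimpleGraph.fromEdgeSet (↑t))
              then 1 else 0))
        = ∑ s ∈ E₀.powerset, (∑ t ∈ E₀.powerset, W1 s * W2 t)
          - ∑ s ∈ E₀.powerset, (∑ t ∈ E₀.powerset, W1 s * (W2 t *
              (if ¬ Qpred (SimpleGraph.fromEdgeSet (↑s)) (SimpleGraph.fromEdgeSet (↑t))
                then 1 else 0))) := by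
          rw [← Finset.sum_sub_distrib]
          apply Finset.sum_congr rfl
          intro s hs
          rw [← Finset.sum_sub_distrib]
          exact Finset.sum_congr rfl (fun t ht => hterm s hs t ht)
      _ = 1 - ∑ s ∈ E₀.powerset, W1 s * (∑ t ∈ E₀.powerset, W2 t *
            (if ¬ Qpred (SimpleGraph.fromEdgeSet (↑s)) (SimpleGraph.fromEdgeSet (↑t))
              then 1 else 0)) := by
          congr 1
          · calc ∑ s ∈ E₀.powerset, (∑ t ∈ E₀.powerset, W1 s * W2 t)
                = ∑ s ∈ E₀.powerset, W1 s * (∑ t ∈ E₀.powerset, W2 t) := by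
                  apply Finset.sum_congr rfl
                  intro s _
                  rw [Finset.mul_sum]
              _ = ∑ s ∈ E₀.powerset, W1 s * 1 := by
                  apply Finset.sum_congr rfl
                  intro s _
                  rw [PercAux.sum_wgt]
              _ = 1 := by
                  simp only [mul_one]
                  exact PercAux.sum_wgt (p - ε) E₀
          · apply Finset.sum_congr rfl
            intro s _
            rw [Finset.mul_sum]
  -- numeric bound
  have hnumeric : BND ≤ Real.exp β * Real.exp (-c * (n:ℝ)) := by
    have e1 : (3:ℝ)^(n / R) = Real.exp (((n / R : ℕ):ℝ) * Real.log 3) := by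
      rw [Real.exp_nat_mul, Real.exp_log (by norm_num : (0:ℝ) < 3)]
    have e2 : (1 - q^L)^k = Real.exp ((k:ℝ) * Real.log (1 - q^L)) := by
      rw [Real.exp_nat_mul, Real.exp_log (by linarith)]
    rw [hBND, e1, e2, ← Real.exp_add, ← Real.exp_add]
    apply Real.exp_le_exp.mpr
    have hk1 : ((n / R : ℕ):ℝ) * Real.log 3 ≤ (n:ℝ) * (β*(b*ε)/(4*(L:ℝ))) := by
      calc ((n / R : ℕ):ℝ) * Real.log 3 ≤ ((n:ℝ)/(R:ℝ)) * Real.log 3 := by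
            apply mul_le_mul_of_nonneg_right (Nat.cast_div_le) hlog3.le
        _ = (n:ℝ) * (Real.log 3 / (R:ℝ)) := by ring
        _ ≤ (n:ℝ) * (β*(b*ε)/(4*(L:ℝ))) := by
            apply mul_le_mul_of_nonneg_left hRbound hnr.le
    have hk2 : (k:ℝ) * Real.log (1 - q^L) ≤ β - (n:ℝ) * (β*(b*ε)/(2*(L:ℝ))) := by
      have hlogneg : Real.log (1 - q^L) = -β := by rw [hβdef]; ring
      have hkfl : b*ε*(n:ℝ)/(2*(L:ℝ)) - 1 ≤ (k:ℝ) := by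
        have := Nat.sub_one_lt_floor (b*ε*(n:ℝ)/(2*(L:ℝ)))
        linarith
      rw [hlogneg]
      have := mul_le_mul_of_nonneg_left hkfl hβ0.le
      calc (k:ℝ) * (-β) = -(β * (k:ℝ)) := by ring
        _ ≤ -(β * (b*ε*(n:ℝ)/(2*(L:ℝ)) - 1)) := by linarith
        _ = β - (n:ℝ) * (β*(b*ε)/(2*(L:ℝ))) := by field_simp; ring
    calc ((n / R : ℕ):ℝ) * Real.log 3 + (k:ℝ) * Real.log (1 - q^L)
        ≤ (n:ℝ) * (β*(b*ε)/(4*(L:ℝ))) + (β - (n:ℝ) * (β*(b*ε)/(2*(L:ℝ)))) := by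
          linarith
      _ ≤ β + -c * (n:ℝ) := by
          rw [hcdef]
          have h4 : (0:ℝ) < 4*(L:ℝ) := by positivity
          have heq : (n:ℝ) * (β*(b*ε)/(4*(L:ℝ))) - (n:ℝ) * (β*(b*ε)/(2*(L:ℝ)))
              = -(β * (b*ε) / (4*(L:ℝ))) * (n:ℝ) := by
            field_simp
            ring
          linarith [heq.le, heq.ge]
  -- conclusion
  have hbadsum : ∑ s ∈ E₀.powerset, W1 s * (∑ t ∈ E₀.powerset, W2 t *
      (if ¬ Qpred (SimpleGraph.fromEdgeSet (↑s)) (SimpleGraph.fromEdgeSet (↑t))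
        then 1 else 0)) ≤ BND := by
    calc (∑ s ∈ E₀.powerset, W1 s * (∑ t ∈ E₀.powerset, W2 t *
          (if ¬ Qpred (SimpleGraph.fromEdgeSet (↑s)) (SimpleGraph.fromEdgeSet (↑t))
            then 1 else 0)))
        ≤ ∑ s ∈ E₀.powerset, W1 s * BND := by
          apply Finset.sum_le_sum
          intro s hs
          exact mul_le_mul_of_nonneg_left (inner s hs) (hW1nn s)
      _ = (∑ s ∈ E₀.powerset, W1 s) * BND := by rw [Finset.sum_mul]
      _ = BND := by rw [PercAux.sum_wgt]; ring
  have hfinal := le_trans hbadsum hnumeric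
  have : percProb2 G (p - ε) q Qpred ≥ 1 - Real.exp β * Real.exp (-c * (n:ℝ)) := by
    rw [hsplit]
    linarith
  exact this

end Percolation

end
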